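/- Every direct sum of pure-injective R-modules is pure-injective if and only if the class of pure-injective R-modules is closed under directed colimits along pure embeddings; that is, if and only if for every directed system of pure-injective R-modules whose transition maps are pure embeddings, the direct limit of the system is pure-injective. -/

import Mathlib

universe u

/-- `A` is a pure submodule of its ambient module: every finite system of
`R`-linear equations `∑ j, r i j • x j = a i` with constants `a i ∈ A` that has
a solution in the ambient module has a solution in `A`. -/
def IsPureSubmodule {R : Type*} [Ring R] {M : Type*} [AddCommGroup M] [Module R M]
    (A : Submodule R M) : Prop :=
  ∀ (m n : ℕ) (r : Fin m → Fin n → R) (a : Fin m → M),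
    (∀ i, a i ∈ A) →
    (∃ x : Fin n → M, ∀ i, (∑ j, r i j • x j) = a i) →
    ∃ x : Fin n → M, (∀ j, x j ∈ A) ∧ ∀ i, (∑ j, r i j • x j) = a i

/-- A pure embedding is an injective linear map whose image is a pure submodule
of its codomain. -/
def IsPureEmbedding {R : Type*} [Ring R] {M N : Type*} [AddCommGroup M] [Module R M]
    [AddCommGroup N] [Module R N] (f : M →ₗ[R] N) : Prop :=
  Function.Injective f ∧ IsPureSubmodule (LinearMap.range f)

/-- `E` is pure-injective: every homomorphism `g : A → E` extends along every
pure embedding `f : A → B`. -/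
def PureInjective (R : Type u) [Ring R] (E : Type u) [AddCommGroup E] [Module R E] : Prop :=
  ∀ (A B : Type u) [AddCommGroup A] [Module R A] [AddCommGroup B] [Module R B]
    (f : A →ₗ[R] B), IsPureEmbedding f →
    ∀ g : A →ₗ[R] E, ∃ h : B →ₗ[R] E, h.comp f = g

section Aux

variable {R : Type u} [Ring R]

theorem pureInjective_of_equiv {E F : Type u} [AddCommGroup E] [Module R E]
    [AddCommGroup F] [Module R F] (e : E ≃ₗ[R] F) (hE : PureInjective R E) :
    PureInjective R F := by
  intro A B _ _ _ _ f hf g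
  obtain ⟨h, hh⟩ := hE A B f hf ((e.symm : F →ₗ[R] E).comp g)
  refine ⟨(e : E →ₗ[R] F).comp h, ?_⟩
  rw [LinearMap.comp_assoc, hh]
  ext a; simp

theorem pureInjective_of_retract {E C : Type u} [AddCommGroup E] [Module R E]
    [AddCommGroup C] [Module R C] (hE : PureInjective R E)
    (s : C →ₗ[R] E) (p : E →ₗ[R] C) (hps : p.comp s = LinearMap.id) :
    PureInjective R C := by
  intro A B _ _ _ _ f hf g
  obtain ⟨h, hh⟩ := hE A B f hf (s.comp g)
  refine ⟨p.comp h, ?_⟩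
  rw [LinearMap.comp_assoc, hh, ← LinearMap.comp_assoc, hps, LinearMap.id_comp]

theorem pureInjective_of_subsingleton {E : Type u} [AddCommGroup E] [Module R E]
    [Subsingleton E] : PureInjective R E := by
  intro A B _ _ _ _ f hf g
  exact ⟨0, by ext a; exact Subsingleton.elim _ _⟩

theorem isPureEmbedding_of_split {M N : Type u} [AddCommGroup M] [Module R M]
    [AddCommGroup N] [Module R N] (f : M →ₗ[R] N) (r : N →ₗ[R] M)
    (h : r.comp f = LinearMap.id) : IsPureEmbedding f := by
  have hinj : Function.Injective f := by
    intro x y hxy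
    have hx : r (f x) = x := congrArg (fun g : M →ₗ[R] M => g x) h
    have hy : r (f y) = y := congrArg (fun g : M →ₗ[R] M => g y) h
    rw [← hx, ← hy, hxy]
  refine ⟨hinj, ?_⟩
  intro m n ρ a ha ⟨x, hx⟩
  choose b hb using ha
  refine ⟨fun j => f (r (x j)), fun j => ⟨r (x j), rfl⟩, fun i => ?_⟩
  have : (∑ j, ρ i j • f (r (x j))) = f (r (∑ j, ρ i j • x j)) := by
    rw [map_sum, map_sum]
    simp [map_smul]
  rw [this, hx i, ← hb i]
  have h1 : r (f (b i)) = b i := congrArg (fun g : M →ₗ[R] M => g (b i)) h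
  rw [h1]

theorem isPureSubmodule_bot {L : Type u} [AddCommGroup L] [Module R L] :
    IsPureSubmodule (⊥ : Submodule R L) := by
  intro m n r a ha _
  refine ⟨0, fun j => Submodule.zero_mem _, fun i => ?_⟩
  have : a i = 0 := (Submodule.mem_bot R).mp (ha i)
  simp [this]

end Aux
section Aux2

variable {R : Type u} [Ring R] {L : Type u} [AddCommGroup L] [Module R L]

/-- Upper bound in a directed set of submodules for a finite subset. -/
theorem directedOn_finset_le {S : Set (Submodule R L)} (hdir : DirectedOn (· ≤ ·) S)
    (hne : S.Nonempty) (t : Finset (Submodule R L)) (ht : ↑t ⊆ S) :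
    ∃ E ∈ S, ∀ D ∈ t, D ≤ E := by
  classical
  induction t using Finset.induction_on with
  | empty => obtain ⟨E, hE⟩ := hne; exact ⟨E, hE, by simp⟩
  | @insert a t ha IH =>
    obtain ⟨E, hE, hEt⟩ := IH (by intro x hx; exact ht (by simp [hx]))
    obtain ⟨F, hF, haF, hEF⟩ := hdir a (ht (by simp)) E hE
    exact ⟨F, hF, by
      intro D hD
      rcases Finset.mem_insert.mp hD with rfl | hD
      · exact haF
      · exact (hEt D hD).trans hEF⟩

theorem isPureSubmodule_sSup_of_directed {S : Set (Submodule R L)} (hne : S.Nonempty)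
    (hdir : DirectedOn (· ≤ ·) S) (hp : ∀ D ∈ S, IsPureSubmodule D) :
    IsPureSubmodule (sSup S) := by
  classical
  intro m n r a ha hsol
  have hmem : ∀ i, ∃ D ∈ S, a i ∈ D := by
    intro i
    exact (Submodule.mem_sSup_of_directed hne hdir).mp (ha i)
  choose D hDS haD using hmem
  obtain ⟨E, hES, hDE⟩ := directedOn_finset_le hdir hne (Finset.image D Finset.univ)
    (by intro x hx; rcases Finset.mem_image.mp hx with ⟨i, _, rfl⟩; exact hDS i)
  have haE : ∀ i, a i ∈ E := fun i =>
    hDE (D i) (Finset.mem_image.mpr ⟨i, Finset.mem_univ i, rfl⟩) (haD i)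
  obtain ⟨x, hxE, hx⟩ := hp E hES m n r a haE hsol
  exact ⟨x, fun j => (le_sSup hES) (hxE j), hx⟩

theorem isPureSubmodule_comap {A N : Submodule R L} (hA : IsPureSubmodule A) (hAN : A ≤ N) :
    IsPureSubmodule (A.comap N.subtype) := by
  intro m n r a ha hsol
  obtain ⟨x, hx⟩ := hsol
  have hsolL : ∃ y : Fin n → L, ∀ i, (∑ j, r i j • y j) = ↑(a i) := by
    refine ⟨fun j => ↑(x j), fun i => ?_⟩
    have := congrArg (N.subtype) (hx i)
    simpa [map_sum, map_smul] using this
  obtain ⟨y, hyA, hy⟩ := hA m n r (fun i => ↑(a i)) (fun i => ha i) hsolL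
  refine ⟨fun j => ⟨y j, hAN (hyA j)⟩, fun j => hyA j, fun i => ?_⟩
  apply Subtype.ext
  push_cast
  simpa using hy i

theorem exists_retraction {D : Submodule R L} (hPI : PureInjective R ↥D)
    (hpure : IsPureSubmodule D) :
    ∃ r : L →ₗ[R] ↥D, r.comp D.subtype = LinearMap.id := by
  refine hPI ↥D L D.subtype ⟨Subtype.coe_injective, ?_⟩ LinearMap.id
  rw [Submodule.range_subtype]
  exact hpure

end Aux2
section Internal

variable {R : Type u} [Ring R] {L : Type u} [AddCommGroup L] [Module R L]

theorem pureInjective_iSup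
    (hDS : ∀ (ι : Type u) (M : ι → Type u) [∀ i, AddCommGroup (M i)] [∀ i, Module R (M i)],
      (∀ i, PureInjective R (M i)) → PureInjective R (DirectSum ι M))
    {ι' : Type u} (P : ι' → Submodule R L) (hind : iSupIndep P)
    (hPI : ∀ i, PureInjective R ↥(P i)) :
    PureInjective R ↥(⨆ i, P i) := by
  classical
  set N := ⨆ i, P i with hN
  have hle : ∀ i, P i ≤ N := fun i => le_iSup P i
  set P' : ι' → Submodule R ↥N := fun i => (P i).comap N.subtype with hP'
  have hmap : ∀ i, Submodule.map N.subtype (P' i) = P i := by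
    intro i
    rw [hP']
    rw [Submodule.map_comap_subtype]
    exact inf_eq_right.mpr (hle i)
  have hind' : iSupIndep P' := by
    intro i
    rw [disjoint_iff]
    rw [eq_bot_iff]
    intro x hx
    obtain ⟨hx1, hx2⟩ := Submodule.mem_inf.mp hx
    have hmem : (x : L) ∈ ⨆ j, ⨆ _ : j ≠ i, P j := by
      have : Submodule.map N.subtype (⨆ j, ⨆ _ : j ≠ i, P' j) = ⨆ j, ⨆ _ : j ≠ i, P j := by
        rw [Submodule.map_iSup]
        refine iSup_congr fun j => ?_
        rw [Submodule.map_iSup]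
        exact iSup_congr fun h => hmap j
      rw [← this]
      exact ⟨x, hx2, rfl⟩
    have : (x : L) = 0 := Submodule.disjoint_def.mp (hind i) _ hx1 hmem
    simpa using Subtype.ext this
  have hsup' : ⨆ i, P' i = ⊤ := by
    apply Submodule.map_injective_of_injective (Submodule.injective_subtype N)
    rw [Submodule.map_iSup]
    simp_rw [hmap]
    rw [Submodule.map_top, Submodule.range_subtype]
  have hint : DirectSum.IsInternal P' :=
    (DirectSum.isInternal_submodule_iff_iSupIndep_and_iSup_eq_top P').mpr ⟨hind', hsup'⟩
  have hPI' : ∀ i, PureInjective R ↥(P' i) := fun i =>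
    pureInjective_of_equiv (Submodule.comapSubtypeEquivOfLe (hle i)).symm (hPI i)
  have hDSpi : PureInjective R (DirectSum ι' (fun i => ↥(P' i))) :=
    hDS ι' (fun i => ↥(P' i)) hPI'
  exact pureInjective_of_equiv (LinearEquiv.ofBijective (DirectSum.coeLinearMap P') hint) hDSpi

/-- Independence from disjointness with the "previous" parts. -/
theorem iSupIndep_of_disjoint_lt {J : Type u} [LinearOrder J] (C : J → Submodule R L)
    (h : ∀ j, Disjoint (⨆ k, ⨆ _ : k < j, C k) (C j)) : iSupIndep C := by
  classical
  intro j
  rw [Submodule.disjoint_def]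
  intro x hxj hxo
  rw [iSup_subtype'] at hxo
  obtain ⟨s, hs⟩ := Submodule.mem_iSup_iff_exists_finset.mp hxo
  induction s using Finset.strongInduction generalizing x with
  | _ s IH =>
    rcases Finset.eq_empty_or_nonempty s with rfl | hsne
    · simpa using hs
    · set mx := s.max' hsne with hmx
      have hmxs : mx ∈ s := s.max'_mem hsne
      rcases lt_or_gt_of_ne mx.2 with hlt | hgt
      · -- every index in s is < j
        have hle : (⨆ k ∈ s, C (k : J)) ≤ ⨆ k, ⨆ _ : k < j, C k := by
          refine iSup₂_le fun k hk => ?_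
          have hkj : (k : J) < j :=
            lt_of_le_of_lt (Subtype.coe_le_coe.mpr (s.le_max' k hk)) hlt
          exact le_iSup_of_le (k : J) (le_iSup (fun _ => C (k : J)) hkj)
        exact Submodule.disjoint_def.mp (h j) x (hle hs) hxj
      · -- mx > j : peel off the max
        have hins : s = insert mx (s.erase mx) := (Finset.insert_erase hmxs).symm
        rw [hins, Finset.iSup_insert] at hs
        obtain ⟨y, hy, z, hz, hyz⟩ := Submodule.mem_sup.mp hs
        have hzW : z ∈ ⨆ k, ⨆ _ : k < (mx : J), C k := by
          have : (⨆ k ∈ s.erase mx, C (k : J)) ≤ ⨆ k, ⨆ _ : k < (mx : J), C k := by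
            refine iSup₂_le fun k hk => ?_
            have hkm : (k : J) < (mx : J) := Subtype.coe_lt_coe.mpr
              (lt_of_le_of_ne (s.le_max' k (Finset.mem_of_mem_erase hk))
                (Finset.ne_of_mem_erase hk))
            exact le_iSup_of_le (k : J) (le_iSup (fun _ => C (k : J)) hkm)
          exact this hz
        have hxW : x ∈ ⨆ k, ⨆ _ : k < (mx : J), C k := by
          exact (le_iSup_of_le (f := fun k => ⨆ _ : k < (mx : J), C k) j (le_iSup (fun _ => C j) hgt)) hxj
        have hy0 : y = 0 := by
          have hyW : y ∈ ⨆ k, ⨆ _ : k < (mx : J), C k := by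
            have : y = x - z := by rw [← hyz]; abel
            rw [this]
            exact Submodule.sub_mem _ hxW hzW
          exact Submodule.disjoint_def.mp (h (mx : J)) y hyW hy
        have hxz : x = z := by rw [← hyz, hy0, zero_add]
        exact IH (s.erase mx) (Finset.erase_ssubset hmxs) x hxj (hxz ▸ hxo) (hxz ▸ hz)

end Internal
section Chain

variable {R : Type u} [Ring R] {L : Type u} [AddCommGroup L] [Module R L]

theorem chain_lemma
    (hDS : ∀ (ι : Type u) (M : ι → Type u) [∀ i, AddCommGroup (M i)] [∀ i, Module R (M i)],
      (∀ i, PureInjective R (M i)) → PureInjective R (DirectSum ι M))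
    {J : Type u} [LinearOrder J] [WellFoundedLT J]
    (V : J → Submodule R L) (hmono : Monotone V)
    (hpure : ∀ j, IsPureSubmodule (V j)) (hPI : ∀ j, PureInjective R ↥(V j))
    (htop : ⨆ j, V j = ⊤) : PureInjective R L := by
  classical
  let C : J → Submodule R L := (wellFounded_lt (α := J)).fix
    (fun j rec =>
      if hc : ∃ Cc : Submodule R L,
          (⨆ k, ⨆ h : k < j, rec k h) ⊓ Cc = ⊥ ∧ (⨆ k, ⨆ h : k < j, rec k h) ⊔ Cc = V j then
        hc.choose else ⊥)
  have hCeq : ∀ j, C j =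
      if hc : ∃ Cc : Submodule R L,
          (⨆ k, ⨆ _ : k < j, C k) ⊓ Cc = ⊥ ∧ (⨆ k, ⨆ _ : k < j, C k) ⊔ Cc = V j then
        hc.choose else ⊥ :=
    fun j => WellFounded.fix_eq _ _ j
  have key : ∀ j : J,
      ((⨆ k, ⨆ _ : k < j, C k) ⊓ C j = ⊥ ∧ (⨆ k, ⨆ _ : k < j, C k) ⊔ C j = V j) ∧
        PureInjective R ↥(C j) := by
    intro j
    induction j using ((wellFounded_lt (α := J)).induction) with
    | _ j IH =>
    set W : Submodule R L := ⨆ k, ⨆ _ : k < j, C k with hW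
    have hCV : ∀ k, k < j → C k ≤ V k := fun k hk =>
      le_sup_right.trans (le_of_eq (IH k hk).1.2)
    have hWV : W = ⨆ k, ⨆ _ : k < j, V k := by
      apply le_antisymm
      · exact iSup₂_le fun k hk =>
          (hCV k hk).trans (le_iSup_of_le k (le_iSup (fun _ => V k) hk))
      · refine iSup₂_le fun k hk => ?_
        rw [← (IH k hk).1.2]
        refine sup_le (iSup₂_le fun l hl => le_iSup_of_le l
          (le_iSup (fun _ => C l) (hl.trans hk))) ?_
        exact le_iSup_of_le k (le_iSup (fun _ => C k) hk)
    have hWle : W ≤ V j := by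
      rw [hWV]; exact iSup₂_le fun k hk => hmono hk.le
    have hWpure : IsPureSubmodule W := by
      by_cases hjb : ∃ k, k < j
      · have hne : (V '' {k | k < j}).Nonempty :=
          ⟨V hjb.choose, hjb.choose, hjb.choose_spec, rfl⟩
        have hdir : DirectedOn (· ≤ ·) (V '' {k | k < j}) := by
          rintro _ ⟨k1, hk1, rfl⟩ _ ⟨k2, hk2, rfl⟩
          rcases le_total k1 k2 with h' | h'
          · exact ⟨V k2, ⟨k2, hk2, rfl⟩, hmono h', le_rfl⟩
          · exact ⟨V k1, ⟨k1, hk1, rfl⟩, le_rfl, hmono h'⟩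
        have hps := isPureSubmodule_sSup_of_directed hne hdir
          (by rintro D ⟨k, hk, rfl⟩; exact hpure k)
        rw [sSup_image] at hps
        have heq : W = ⨆ a ∈ {k | k < j}, V a := by rw [hWV]; rfl
        rw [heq]
        exact hps
      · have hWbot : W = ⊥ := by
          rw [hWV]
          exact le_bot_iff.mp (iSup₂_le fun k hk => absurd ⟨k, hk⟩ hjb)
        rw [hWbot]
        exact isPureSubmodule_bot
    have hWsub : W = ⨆ k : {k // k < j}, C k.val := by
      rw [hW, iSup_subtype]
    have hindsub : iSupIndep (fun k : {k // k < j} => C k.val) := by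
      apply iSupIndep_of_disjoint_lt
      intro k'
      have hle' : (⨆ l : {k // k < j}, ⨆ _ : l < k', C l.val) ≤ ⨆ k, ⨆ _ : k < k'.val, C k :=
        iSup₂_le fun l hl => le_iSup_of_le l.val
          (le_iSup (fun _ => C l.val) (Subtype.coe_lt_coe.mpr hl))
      exact Disjoint.mono_left hle' (disjoint_iff.mpr (IH k'.val k'.2).1.1)
    have hWPI : PureInjective R ↥W := by
      rw [hWsub]
      exact pureInjective_iSup hDS _ hindsub (fun k => (IH k.1 k.2).2)
    -- existence of a complement of W inside V j
    have hmapW' : Submodule.map (V j).subtype (W.comap (V j).subtype) = W := by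
      rw [Submodule.map_comap_subtype]; exact inf_eq_right.mpr hWle
    have hex : ∃ Cc : Submodule R L, W ⊓ Cc = ⊥ ∧ W ⊔ Cc = V j := by
      have hW'pure : IsPureSubmodule (W.comap (V j).subtype) := isPureSubmodule_comap hWpure hWle
      have hW'PI : PureInjective R ↥(W.comap (V j).subtype) :=
        pureInjective_of_equiv (Submodule.comapSubtypeEquivOfLe hWle).symm hWPI
      obtain ⟨r, hr⟩ := exists_retraction hW'PI hW'pure
      refine ⟨Submodule.map (V j).subtype (LinearMap.ker r), ?_, ?_⟩
      · have hbot : W.comap (V j).subtype ⊓ LinearMap.ker r = ⊥ := by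
          rw [eq_bot_iff]
          rintro x hx
          obtain ⟨hx1, hx2⟩ := Submodule.mem_inf.mp hx
          have hrx : r x = ⟨x, hx1⟩ :=
            congrArg (fun g : ↥(W.comap (V j).subtype) →ₗ[R] ↥(W.comap (V j).subtype) =>
              g ⟨x, hx1⟩) hr
          have : (⟨x, hx1⟩ : ↥(W.comap (V j).subtype)) = 0 := by
            rw [← hrx]; exact hx2
          have := congrArg (Subtype.val) this
          simpa using this
        have hh : Submodule.map (V j).subtype (W.comap (V j).subtype) ⊓
            Submodule.map (V j).subtype (LinearMap.ker r) = ⊥ := by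
          rw [← Submodule.map_inf _ (Submodule.injective_subtype (V j)), hbot,
            Submodule.map_bot]
        rwa [hmapW'] at hh
      · have htop' : W.comap (V j).subtype ⊔ LinearMap.ker r = ⊤ := by
          rw [eq_top_iff]
          rintro y -
          refine Submodule.mem_sup.mpr
            ⟨(W.comap (V j).subtype).subtype (r y), (r y).2, y - (W.comap (V j).subtype).subtype (r y), ?_, by abel⟩
          rw [LinearMap.mem_ker, map_sub]
          have : r ((W.comap (V j).subtype).subtype (r y)) = r y :=
            congrArg (fun g : ↥(W.comap (V j).subtype) →ₗ[R] ↥(W.comap (V j).subtype) =>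
              g (r y)) hr
          rw [this, sub_self]
        have hh : Submodule.map (V j).subtype (W.comap (V j).subtype) ⊔
            Submodule.map (V j).subtype (LinearMap.ker r) = V j := by
          rw [← Submodule.map_sup, htop', Submodule.map_top, Submodule.range_subtype]
        rwa [hmapW'] at hh
    have hCj : C j = hex.choose := by
      rw [hCeq j, dif_pos hex]
    have h1 : W ⊓ C j = ⊥ := by rw [hCj]; exact hex.choose_spec.1
    have h2 : W ⊔ C j = V j := by rw [hCj]; exact hex.choose_spec.2
    refine ⟨⟨h1, h2⟩, ?_⟩
    -- pure-injectivity of the complement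
    have hCle : C j ≤ V j := le_sup_right.trans h2.le
    set W'' : Submodule R ↥(V j) := W.comap (V j).subtype with hW''
    set C'' : Submodule R ↥(V j) := (C j).comap (V j).subtype with hC''
    have hdisj : C'' ⊓ W'' = ⊥ := by
      rw [hC'', hW'', ← Submodule.comap_inf, inf_comm, h1, Submodule.comap_bot,
        Submodule.ker_subtype]
    have hcodis : C'' ⊔ W'' = ⊤ := by
      rw [eq_top_iff]
      rintro x -
      have hx : (x : L) ∈ W ⊔ C j := h2.symm ▸ x.2
      obtain ⟨w, hw, c, hc, hwc⟩ := Submodule.mem_sup.mp hx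
      refine Submodule.mem_sup.mpr
        ⟨⟨c, hCle hc⟩, hc, ⟨w, hWle hw⟩, hw, ?_⟩
      apply Subtype.ext
      simpa using by rw [add_comm]; exact hwc
    have hcompl : IsCompl C'' W'' := ⟨disjoint_iff.mpr hdisj, codisjoint_iff.mpr hcodis⟩
    have hprojPI : PureInjective R ↥C'' := by
      refine pureInjective_of_retract (hPI j) C''.subtype
        (C''.projectionOnto W'' hcompl) ?_
      ext x
      simp [Submodule.projectionOnto_apply_left]
    exact pureInjective_of_equiv (Submodule.comapSubtypeEquivOfLe hCle) hprojPI
  have hind : iSupIndep C :=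
    iSupIndep_of_disjoint_lt C (fun j => disjoint_iff.mpr (key j).1.1)
  have hsupC : ⨆ j, C j = ⊤ := by
    apply le_antisymm le_top
    rw [← htop]
    refine iSup_le fun j => ?_
    rw [← (key j).1.2]
    exact sup_le (iSup₂_le fun k _ => le_iSup C k) (le_iSup C j)
  have hfin := pureInjective_iSup hDS C hind (fun j => (key j).2)
  rw [hsupC] at hfin
  exact pureInjective_of_equiv (Submodule.topEquiv) hfin

end Chain
/-- A synonym to carry a chosen well-order without instance clashes. -/
def WOType (α : Type u) : Type u := α

section Closure

variable {α : Type u}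

/-- Iterative closure of a set under a binary operation. -/
def closF (u : α → α → α) (A : Set α) : ℕ → Set α
  | 0 => A
  | n + 1 => closF u A n ∪ Set.image2 u (closF u A n) (closF u A n)

def clos (u : α → α → α) (A : Set α) : Set α := ⋃ n, closF u A n

theorem closF_mono_nat (u : α → α → α) (A : Set α) {m n : ℕ} (h : m ≤ n) :
    closF u A m ⊆ closF u A n := by
  induction n with
  | zero => simpa [Nat.le_zero.mp h] using subset_rfl
  | succ n ih =>
    rcases Nat.lt_or_ge m (n + 1) with h' | h'
    · exact (ih (Nat.lt_succ_iff.mp h')).trans Set.subset_union_left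
    · have : m = n + 1 := le_antisymm h h'
      subst this; exact subset_rfl

theorem subset_clos (u : α → α → α) (A : Set α) : A ⊆ clos u A :=
  fun x hx => Set.mem_iUnion.mpr ⟨0, hx⟩

theorem clos_closed {u : α → α → α} {A : Set α} {x y : α}
    (hx : x ∈ clos u A) (hy : y ∈ clos u A) : u x y ∈ clos u A := by
  obtain ⟨m, hm⟩ := Set.mem_iUnion.mp hx
  obtain ⟨n, hn⟩ := Set.mem_iUnion.mp hy
  refine Set.mem_iUnion.mpr ⟨max m n + 1, Or.inr ?_⟩
  exact Set.mem_image2_of_mem (closF_mono_nat u A (le_max_left m n) hm)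
    (closF_mono_nat u A (le_max_right m n) hn)

theorem clos_mono (u : α → α → α) {A B : Set α} (h : A ⊆ B) : clos u A ⊆ clos u B := by
  have hF : ∀ n, closF u A n ⊆ closF u B n := by
    intro n
    induction n with
    | zero => exact h
    | succ n ih => exact Set.union_subset_union ih (Set.image2_subset ih ih)
  exact fun x hx => by
    obtain ⟨n, hn⟩ := Set.mem_iUnion.mp hx
    exact Set.mem_iUnion.mpr ⟨n, hF n hn⟩

open Cardinal in
theorem mk_clos_le (u : α → α → α) (A : Set α) :
    #(clos u A) ≤ max #A ℵ₀ := by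
  have hF : ∀ n, #(closF u A n) ≤ max #A ℵ₀ := by
    intro n
    induction n with
    | zero => exact le_max_left _ _
    | succ n ih =>
      calc #(closF u A (n+1)) ≤ #(closF u A n) + #(Set.image2 u (closF u A n) (closF u A n)) :=
            mk_union_le _ _
        _ ≤ max #A ℵ₀ + #(closF u A n) * #(closF u A n) :=
            add_le_add ih mk_image2_le
        _ ≤ max #A ℵ₀ + (max #A ℵ₀) * (max #A ℵ₀) :=
            add_le_add le_rfl (mul_le_mul' ih ih)
        _ = max #A ℵ₀ := by
            rw [mul_eq_self (le_max_right _ _), add_eq_self (le_max_right _ _)]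
  have hU : clos u A = ⋃ m : ULift.{u} ℕ, closF u A m.down := by
    ext x
    simp only [clos, Set.mem_iUnion]
    exact ⟨fun ⟨n, h⟩ => ⟨⟨n⟩, h⟩, fun ⟨m, h⟩ => ⟨m.down, h⟩⟩
  rw [hU]
  calc #(⋃ m : ULift.{u} ℕ, closF u A m.down) ≤ #(ULift.{u} ℕ) * ⨆ m : ULift.{u} ℕ, #(closF u A m.down) :=
        mk_iUnion_le _
    _ ≤ ℵ₀ * max #A ℵ₀ := by
        refine mul_le_mul' ?_ (ciSup_le' fun m => hF m.down)
        rw [mk_uLift, mk_nat, lift_aleph0]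
    _ = max #A ℵ₀ := by
        rw [mul_eq_max le_rfl (le_max_right _ _)]
        exact max_eq_right (le_max_right _ _)

end Closure
section DirectedUnion

variable {R : Type u} [Ring R]

open Cardinal in
theorem directed_union_lemma
    (hDS : ∀ (ι : Type u) (M : ι → Type u) [∀ i, AddCommGroup (M i)] [∀ i, Module R (M i)],
      (∀ i, PureInjective R (M i)) → PureInjective R (DirectSum ι M))
    (c : Cardinal.{u}) :
    ∀ (L : Type u) [AddCommGroup L] [Module R L] (S : Set (Submodule R L)),
      Cardinal.mk S = c → DirectedOn (· ≤ ·) S →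
      (∀ D ∈ S, IsPureSubmodule D) → (∀ D ∈ S, PureInjective R ↥D) →
      sSup S = ⊤ → PureInjective R L := by
  classical
  refine Cardinal.lt_wf.induction (C := fun c =>
    ∀ (L : Type u) [AddCommGroup L] [Module R L] (S : Set (Submodule R L)),
      Cardinal.mk S = c → DirectedOn (· ≤ ·) S →
      (∀ D ∈ S, IsPureSubmodule D) → (∀ D ∈ S, PureInjective R ↥D) →
      sSup S = ⊤ → PureInjective R L) c ?_
  intro c IH L _ _ S hcard hdir hpureS hPIS htop
  subst hcard
  by_cases htopS : ∃ D ∈ S, D = ⊤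
  · obtain ⟨D, hDmem, rfl⟩ := htopS
    exact pureInjective_of_equiv Submodule.topEquiv (hPIS ⊤ hDmem)
  by_cases hSne : S.Nonempty
  swap
  · -- S is empty, so L is trivial
    have hbt : (⊤ : Submodule R L) = ⊥ := by
      rw [← htop, Set.not_nonempty_iff_eq_empty.mp hSne, sSup_empty]
    have hsub : Subsingleton L := by
      constructor
      intro a b
      have ha : a ∈ (⊥ : Submodule R L) := hbt ▸ Submodule.mem_top
      have hb : b ∈ (⊥ : Submodule R L) := hbt ▸ Submodule.mem_top
      rw [Submodule.mem_bot] at ha hb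
      rw [ha, hb]
    exact @pureInjective_of_subsingleton R _ L _ _ hsub
  by_cases hfin : S.Finite
  · -- finite directed set has a maximum, which must be ⊤
    obtain ⟨E, hES, hmax⟩ := directedOn_finset_le hdir hSne hfin.toFinset (by simp)
    have hle : sSup S ≤ E := sSup_le fun D hD => hmax D (hfin.mem_toFinset.mpr hD)
    exact absurd ⟨E, hES, le_antisymm le_top (htop ▸ hle)⟩ htopS
  -- S infinite
  have hinf : Infinite ↥S := Set.infinite_coe_iff.mpr hfin
  have haleph : ℵ₀ ≤ #S := Cardinal.infinite_iff.mp hinf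
  have hu : ∀ D E : ↥S, ∃ F : ↥S, (D : Submodule R L) ≤ F ∧ (E : Submodule R L) ≤ F := by
    intro D E
    obtain ⟨F, hF, h1, h2⟩ := hdir D D.2 E E.2
    exact ⟨⟨F, hF⟩, h1, h2⟩
  choose uf hu1 hu2 using hu
  rcases eq_or_lt_of_le haleph with hcount | huncount
  · -- countable case : build a cofinal ω-chain
    have hcnt : Countable ↥S := Cardinal.mk_le_aleph0_iff.mp hcount.ge
    obtain ⟨hden⟩ := nonempty_denumerable ↥S
    letI := hden
    let e : ℕ ≃ ↥S := (Denumerable.eqv ↥S).symm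
    let D : ℕ → ↥S := fun n => Nat.rec (e 0) (fun n Dn => uf Dn (e (n + 1))) n
    have hDsucc : ∀ n, D (n + 1) = uf (D n) (e (n + 1)) := fun n => rfl
    have hD1 : ∀ n, (D n).1 ≤ (D (n+1)).1 := by
      intro n; rw [hDsucc]; exact hu1 _ _
    let V : ULift.{u} ℕ → Submodule R L := fun n => (D n.down).1
    letI : WellFoundedLT (ULift.{u} ℕ) :=
      ⟨InvImage.wf (fun a : ULift.{u} ℕ => a.down) (wellFounded_lt (α := ℕ))⟩
    have hmonoV : Monotone V := by
      have hstep : ∀ n : ℕ, (D n).1 ≤ (D (n + 1)).1 := hD1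
      have hmn : ∀ m n : ℕ, m ≤ n → (D m).1 ≤ (D n).1 := by
        intro m n h
        induction n with
        | zero => rw [Nat.le_zero.mp h]
        | succ n ih =>
          rcases Nat.lt_or_ge m (n + 1) with h' | h'
          · exact (ih (Nat.lt_succ_iff.mp h')).trans (hstep n)
          · rw [le_antisymm h h']
      intro a b hab
      exact hmn a.down b.down hab
    have hcof : ∀ s : ↥S, s.1 ≤ (D (e.symm s)).1 := by
      intro s
      have : ∀ n, (e n).1 ≤ (D n).1 := by
        intro n
        cases n with
        | zero => exact le_rfl
        | succ n => rw [hDsucc]; exact hu2 _ _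
      have h2 := this (e.symm s)
      rwa [Equiv.apply_symm_apply] at h2
    have htopV : ⨆ n, V n = ⊤ := by
      apply le_antisymm le_top
      rw [← htop]
      refine sSup_le fun A hA => ?_
      exact (hcof ⟨A, hA⟩).trans (le_iSup V ⟨e.symm ⟨A, hA⟩⟩)
    exact chain_lemma hDS V hmonoV (fun n => hpureS _ (D n.down).2)
      (fun n => hPIS _ (D n.down).2) htopV
  · -- uncountable case
    obtain ⟨rel, wo, hord⟩ := Cardinal.ord_eq ↥S
    let J : Type u := WOType ↥S
    letI instwo : IsWellOrder J rel := wo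
    letI : LinearOrder J := IsWellOrder.linearOrder rel
    letI : WellFoundedLT J := ⟨instwo.toIsWellFounded.wf⟩
    let uf' : J → J → J := uf
    let V : J → Submodule R L := fun j =>
      sSup ((fun d : J => (d : ↥S).1) '' clos uf' (Set.Iic j))
    have hrel_lt : ∀ a b : J, a < b ↔ rel a b := fun a b => Iff.rfl
    have hu1' : ∀ a b : J, ((a : ↥S)).1 ≤ ((uf' a b : ↥S)).1 := fun a b => hu1 a b
    have hu2' : ∀ a b : J, ((b : ↥S)).1 ≤ ((uf' a b : ↥S)).1 := fun a b => hu2 a b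
    have hclmem : ∀ j : J, j ∈ clos uf' (Set.Iic j) :=
      fun j => subset_clos uf' _ (Set.mem_Iic.mpr le_rfl)
    have hneim : ∀ j : J, ((fun d : J => (d : ↥S).1) '' clos uf' (Set.Iic j)).Nonempty :=
      fun j => ⟨(j : ↥S).1, j, hclmem j, rfl⟩
    have hdirim : ∀ A : Set J,
        DirectedOn (· ≤ ·) ((fun d : J => (d : ↥S).1) '' clos uf' A) := by
      intro A
      rintro _ ⟨d1, hd1, rfl⟩ _ ⟨d2, hd2, rfl⟩
      exact ⟨((uf' d1 d2 : ↥S)).1, ⟨uf' d1 d2, clos_closed hd1 hd2, rfl⟩,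
        hu1' d1 d2, hu2' d1 d2⟩
    have hmonoV : Monotone V := by
      intro j1 j2 h
      exact sSup_le_sSup (Set.image_mono (clos_mono uf' (Set.Iic_subset_Iic.mpr h)))
    have hpureV : ∀ j, IsPureSubmodule (V j) := by
      intro j
      refine isPureSubmodule_sSup_of_directed (hneim j) (hdirim _) ?_
      rintro _ ⟨d, _, rfl⟩
      exact hpureS _ (d : ↥S).2
    have hPIV : ∀ j, PureInjective R ↥(V j) := by
      intro j
      have hleV : ∀ D ∈ (fun d : J => (d : ↥S).1) '' clos uf' (Set.Iic j), D ≤ V j :=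
        fun D hD => le_sSup hD
      set S' : Set (Submodule R ↥(V j)) :=
        (fun D : Submodule R L => D.comap (V j).subtype) ''
          ((fun d : J => (d : ↥S).1) '' clos uf' (Set.Iic j)) with hS'
      have hIio : #(Set.Iio j) < #S := by
        have h1 := Cardinal.card_typein_lt (r := rel) (j : ↥S) hord
        exact h1
      have hIic : #(Set.Iic j) < #S := by
        rw [← Set.Iio_insert]
        refine lt_of_le_of_lt Cardinal.mk_insert_le ?_
        exact Cardinal.add_lt_of_lt haleph hIio (lt_of_lt_of_le Cardinal.one_lt_aleph0 haleph)
      have hltS' : #S' < #S := by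
        refine lt_of_le_of_lt (Cardinal.mk_image_le.trans
          (Cardinal.mk_image_le.trans (mk_clos_le uf' _))) ?_
        exact max_lt hIic huncount
      refine IH #S' hltS' ↥(V j) S' rfl ?_ ?_ ?_ ?_
      · rintro _ ⟨D1, hD1, rfl⟩ _ ⟨D2, hD2, rfl⟩
        obtain ⟨D3, hD3, h13, h23⟩ := hdirim _ D1 hD1 D2 hD2
        exact ⟨D3.comap (V j).subtype, ⟨D3, hD3, rfl⟩,
          Submodule.comap_mono h13, Submodule.comap_mono h23⟩
      · rintro _ ⟨D, hD, rfl⟩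
        refine isPureSubmodule_comap ?_ (hleV D hD)
        obtain ⟨d, _, rfl⟩ := hD
        exact hpureS _ (d : ↥S).2
      · rintro _ ⟨D, hD, rfl⟩
        refine pureInjective_of_equiv (Submodule.comapSubtypeEquivOfLe (hleV D hD)).symm ?_
        obtain ⟨d, _, rfl⟩ := hD
        exact hPIS _ (d : ↥S).2
      · apply le_antisymm le_top
        rintro x -
        have hx : (x : L) ∈ V j := x.2
        obtain ⟨D, hD, hxD⟩ := (Submodule.mem_sSup_of_directed (hneim j) (hdirim _)).mp hx
        exact le_sSup (show D.comap (V j).subtype ∈ S' from ⟨D, hD, rfl⟩)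
          (Submodule.mem_comap.mpr hxD)
    have htopV : ⨆ j, V j = ⊤ := by
      apply le_antisymm le_top
      rw [← htop]
      refine sSup_le fun A hA => ?_
      refine le_trans ?_ (le_iSup V (show J from (⟨A, hA⟩ : ↥S)))
      exact le_sSup ⟨(show J from (⟨A, hA⟩ : ↥S)), hclmem _, rfl⟩
    exact chain_lemma hDS V hmonoV hpureV hPIV htopV

end DirectedUnion
section Forward

variable {R : Type u} [Ring R]

open Cardinal in
theorem forward_dir
    (hDS : ∀ (ι : Type u) (M : ι → Type u) [∀ i, AddCommGroup (M i)] [∀ i, Module R (M i)],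
      (∀ i, PureInjective R (M i)) → PureInjective R (DirectSum ι M)) :
    ∀ (ι : Type u) [Preorder ι] [IsDirected ι (· ≤ ·)] [Nonempty ι] [DecidableEq ι]
      (G : ι → Type u) [∀ i, AddCommGroup (G i)] [∀ i, Module R (G i)]
      (f : ∀ i j, i ≤ j → G i →ₗ[R] G j) [DirectedSystem G fun i j h => f i j h],
      (∀ i, PureInjective R (G i)) →
      (∀ (i j : ι) (h : i ≤ j), IsPureEmbedding (f i j h)) →
      PureInjective R (Module.DirectLimit G f) := by
  intro ι _ _ _ _ G _ _ f _ hPI hpemb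
  classical
  have hinj : ∀ i, Function.Injective (Module.DirectLimit.of R ι G f i) := by
    intro i x y hxy
    have h0 : Module.DirectLimit.of R ι G f i (x - y) = 0 := by
      rw [map_sub, hxy, sub_self]
    obtain ⟨j, hij, hj⟩ := Module.DirectLimit.of.zero_exact h0
    have h1 : f i j hij (x - y) = f i j hij 0 := by rw [hj, map_zero]
    have := (hpemb i j hij).1 h1
    rwa [sub_eq_zero] at this
  set S : Set (Submodule R (Module.DirectLimit G f)) :=
    Set.range (fun i => LinearMap.range (Module.DirectLimit.of R ι G f i)) with hS
  have hrange_le : ∀ i j (h : i ≤ j),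
      LinearMap.range (Module.DirectLimit.of R ι G f i) ≤
        LinearMap.range (Module.DirectLimit.of R ι G f j) := by
    rintro i j h - ⟨x, rfl⟩
    exact ⟨f i j h x, Module.DirectLimit.of_f⟩
  have hdir : DirectedOn (· ≤ ·) S := by
    rintro _ ⟨i, rfl⟩ _ ⟨j, rfl⟩
    obtain ⟨k, hik, hjk⟩ := exists_ge_ge i j
    exact ⟨_, ⟨k, rfl⟩, hrange_le i k hik, hrange_le j k hjk⟩
  have hpure : ∀ D ∈ S, IsPureSubmodule D := by
    rintro _ ⟨i, rfl⟩
    intro m n ρ a ha hsol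
    choose b hb using fun p => ha p
    obtain ⟨x, hx⟩ := hsol
    choose k y hy using fun jj => Module.DirectLimit.exists_of (x jj)
    -- common upper bound of i and all k j
    obtain ⟨M, hM⟩ := Finset.exists_le (insert i (Finset.image k Finset.univ))
    have hiM : i ≤ M := hM i (Finset.mem_insert_self _ _)
    have hkM : ∀ jj, k jj ≤ M := fun jj =>
      hM (k jj) (Finset.mem_insert_of_mem (Finset.mem_image.mpr ⟨jj, Finset.mem_univ _, rfl⟩))
    -- the system holds in G M
    have hGM : ∀ p, (∑ jj, ρ p jj • f (k jj) M (hkM jj) (y jj)) = f i M hiM (b p) := by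
      intro p
      apply hinj M
      rw [map_sum]
      have : ∀ jj, Module.DirectLimit.of R ι G f M (ρ p jj • f (k jj) M (hkM jj) (y jj)) =
          ρ p jj • x jj := by
        intro jj
        rw [map_smul, Module.DirectLimit.of_f, hy jj]
      rw [Finset.sum_congr rfl (fun jj _ => this jj)]
      rw [Module.DirectLimit.of_f, hb p, hx p]
    -- purity of f i M
    obtain ⟨z, hzmem, hz⟩ := (hpemb i M hiM).2 m n ρ (fun p => f i M hiM (b p))
      (fun p => ⟨b p, rfl⟩) ⟨fun jj => f (k jj) M (hkM jj) (y jj), hGM⟩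
    choose w hw using hzmem
    refine ⟨fun jj => Module.DirectLimit.of R ι G f i (w jj), fun jj => ⟨w jj, rfl⟩, ?_⟩
    intro p
    have h1 : ∀ jj, Module.DirectLimit.of R ι G f i (w jj) =
        Module.DirectLimit.of R ι G f M (z jj) := by
      intro jj
      rw [← hw jj, Module.DirectLimit.of_f]
    calc (∑ jj, ρ p jj • Module.DirectLimit.of R ι G f i (w jj))
        = ∑ jj, ρ p jj • Module.DirectLimit.of R ι G f M (z jj) := by
          exact Finset.sum_congr rfl fun jj _ => by rw [h1 jj]
      _ = Module.DirectLimit.of R ι G f M (∑ jj, ρ p jj • z jj) := by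
          rw [map_sum]; exact Finset.sum_congr rfl fun jj _ => by rw [map_smul]
      _ = Module.DirectLimit.of R ι G f M (f i M hiM (b p)) := by rw [hz p]
      _ = a p := by rw [Module.DirectLimit.of_f, hb p]
  have hPIS : ∀ D ∈ S, PureInjective R ↥D := by
    rintro _ ⟨i, rfl⟩
    exact pureInjective_of_equiv
      (LinearEquiv.ofInjective (Module.DirectLimit.of R ι G f i) (hinj i)) (hPI i)
  have htop : sSup S = ⊤ := by
    apply le_antisymm le_top
    rintro z -
    obtain ⟨i, x, rfl⟩ := Module.DirectLimit.exists_of z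
    exact le_sSup (show LinearMap.range (Module.DirectLimit.of R ι G f i) ∈ S from ⟨i, rfl⟩)
      ⟨x, rfl⟩
  exact directed_union_lemma hDS #S (Module.DirectLimit G f) S rfl hdir hpure hPIS htop

end Forward
section Backward

variable {R : Type u} [Ring R] {ι : Type u} [DecidableEq ι]
variable (M : ι → Type u) [∀ i, AddCommGroup (M i)] [∀ i, Module R (M i)]

/-- The finite sub-sum of a direct sum over a finset. -/
abbrev FinsetSumG (R : Type u) [Ring R] (M : ι → Type u) [∀ i, AddCommGroup (M i)]
    [∀ i, Module R (M i)] (s : Finset ι) : Type u :=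
  DirectSum {i // i ∈ s} (fun i => M i.1)

variable (R)

/-- Transition maps between finite sub-sums. -/
def finsetSumTr (s t : Finset ι) (h : s ≤ t) : FinsetSumG R M s →ₗ[R] FinsetSumG R M t :=
  DirectSum.toModule R {i // i ∈ s} (FinsetSumG R M t)
    (fun i => DirectSum.lof R {i // i ∈ t} (fun i => M i.1) ⟨i.1, h i.2⟩)

theorem finsetSumTr_lof (s t : Finset ι) (h : s ≤ t) (i : {i // i ∈ s}) (x : M i.1) :
    finsetSumTr R M s t h (DirectSum.lof R {i // i ∈ s} (fun i => M i.1) i x) =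
      DirectSum.lof R {i // i ∈ t} (fun i => M i.1) ⟨i.1, h i.2⟩ x :=
  DirectSum.toModule_lof (R := R) (ι := {i // i ∈ s}) (M := fun i => M i.1)
    (N := FinsetSumG R M t)
    (φ := fun i => DirectSum.lof R {i // i ∈ t} (fun i => M i.1) ⟨i.1, h i.2⟩) i x

theorem finsetSumTr_comp (s t v : Finset ι) (hst : s ≤ t) (htv : t ≤ v) :
    (finsetSumTr R M t v htv).comp (finsetSumTr R M s t hst) =
      finsetSumTr R M s v (hst.trans htv) := by
  apply DirectSum.linearMap_ext
  intro i
  ext x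
  simp only [LinearMap.comp_apply]
  rw [finsetSumTr_lof R M s t hst i x,
    finsetSumTr_lof R M t v htv ⟨i.1, hst i.2⟩ x,
    finsetSumTr_lof R M s v (hst.trans htv) i x]

theorem finsetSumTr_self (s : Finset ι) :
    finsetSumTr R M s s le_rfl = LinearMap.id := by
  apply DirectSum.linearMap_ext
  intro i
  ext x : 1
  simp only [LinearMap.comp_apply, LinearMap.id_comp, LinearMap.id_apply]
  exact finsetSumTr_lof R M s s le_rfl i x

instance : DirectedSystem (FinsetSumG R M) (fun s t h => finsetSumTr R M s t h) := by
  constructor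
  · intro s x
    exact congrArg (fun φ : FinsetSumG R M s →ₗ[R] FinsetSumG R M s => φ x)
      (finsetSumTr_self R M s)
  · intro k j i hij hjk x
    calc finsetSumTr R M j k hjk (finsetSumTr R M i j hij x)
        = ((finsetSumTr R M j k hjk).comp (finsetSumTr R M i j hij)) x := rfl
      _ = finsetSumTr R M i k (hij.trans hjk) x := by rw [finsetSumTr_comp]

theorem finsetSumG_pureInjective (hPI : ∀ i, PureInjective R (M i)) (s : Finset ι) :
    PureInjective R (FinsetSumG R M s) := by
  intro A B _ _ _ _ fAB hfAB g
  have hcomp : ∀ i : {i // i ∈ s}, ∃ h : B →ₗ[R] M i.1,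
      h.comp fAB = (DirectSum.component R {i // i ∈ s} (fun i => M i.1) i).comp g :=
    fun i => hPI i.1 A B fAB hfAB _
  choose hext hhext using hcomp
  refine ⟨∑ i : {i // i ∈ s},
    (DirectSum.lof R {i // i ∈ s} (fun i => M i.1) i).comp (hext i), ?_⟩
  ext a : 1
  rw [LinearMap.comp_apply]
  simp only [LinearMap.coe_sum, Finset.sum_apply]
  have hterm : ∀ i : {i // i ∈ s},
      ((DirectSum.lof R {i // i ∈ s} (fun i => M i.1) i).comp (hext i)) (fAB a) =
        DirectSum.of (fun i : {i // i ∈ s} => M i.1) i ((g a) i) := by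
    intro i
    rw [LinearMap.comp_apply]
    have := congrArg (fun φ : A →ₗ[R] M i.1 => φ a) (hhext i)
    simp only [LinearMap.comp_apply] at this
    rw [this]
    rfl
  rw [Finset.sum_congr rfl (fun i _ => hterm i)]
  exact DirectSum.sum_univ_of (g a)

theorem finsetSumTr_pureEmbedding (s t : Finset ι) (h : s ≤ t) :
    IsPureEmbedding (finsetSumTr R M s t h) := by
  refine isPureEmbedding_of_split (finsetSumTr R M s t h)
    (DirectSum.toModule R {i // i ∈ t} (FinsetSumG R M s)
      (fun i => if hi : i.1 ∈ s then DirectSum.lof R {i // i ∈ s} (fun i => M i.1) ⟨i.1, hi⟩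
        else 0)) ?_
  apply DirectSum.linearMap_ext
  intro i
  ext x
  simp only [LinearMap.comp_apply, LinearMap.id_comp, LinearMap.id_apply]
  rw [finsetSumTr_lof R M s t h i x]
  rw [DirectSum.toModule_lof (R := R) (ι := {i // i ∈ t}) (M := fun i => M i.1)
    (N := FinsetSumG R M s)
    (φ := fun i => if hi : i.1 ∈ s then DirectSum.lof R {i // i ∈ s} (fun i => M i.1) ⟨i.1, hi⟩
      else 0) (⟨i.1, h i.2⟩ : {i // i ∈ t}) x]
  rw [dif_pos i.2]

/-- The map from the direct limit of finite sub-sums to the direct sum. -/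
def finsetSumφaux (s : Finset ι) : FinsetSumG R M s →ₗ[R] DirectSum ι M :=
  DirectSum.toModule R {i // i ∈ s} (DirectSum ι M) (fun i => DirectSum.lof R ι M i.1)

theorem finsetSumφaux_lof (s : Finset ι) (i : {i // i ∈ s}) (x : M i.1) :
    finsetSumφaux R M s (DirectSum.lof R {i // i ∈ s} (fun i => M i.1) i x) =
      DirectSum.lof R ι M i.1 x :=
  DirectSum.toModule_lof (R := R) (ι := {i // i ∈ s}) (M := fun i => M i.1)
    (N := DirectSum ι M) (φ := fun i => DirectSum.lof R ι M i.1) i x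

theorem finsetSumφaux_compat (s t : Finset ι) (h : s ≤ t) (x : FinsetSumG R M s) :
    finsetSumφaux R M t (finsetSumTr R M s t h x) = finsetSumφaux R M s x := by
  have hmap : (finsetSumφaux R M t).comp (finsetSumTr R M s t h) = finsetSumφaux R M s := by
    apply DirectSum.linearMap_ext
    intro i
    ext x
    simp only [LinearMap.comp_apply]
    rw [finsetSumTr_lof R M s t h i x, finsetSumφaux_lof R M t ⟨i.1, h i.2⟩ x,
      finsetSumφaux_lof R M s i x]
  calc finsetSumφaux R M t (finsetSumTr R M s t h x)
      = ((finsetSumφaux R M t).comp (finsetSumTr R M s t h)) x := rfl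
    _ = finsetSumφaux R M s x := by rw [hmap]

theorem backward_dir
    (hRHS : ∀ (κ : Type u) [Preorder κ] [IsDirected κ (· ≤ ·)] [Nonempty κ] [DecidableEq κ]
      (G : κ → Type u) [∀ i, AddCommGroup (G i)] [∀ i, Module R (G i)]
      (f : ∀ i j, i ≤ j → G i →ₗ[R] G j) [DirectedSystem G fun i j h => f i j h],
      (∀ i, PureInjective R (G i)) →
      (∀ (i j : κ) (h : i ≤ j), IsPureEmbedding (f i j h)) →
      PureInjective R (Module.DirectLimit G f))
    (hPI : ∀ i, PureInjective R (M i)) : PureInjective R (DirectSum ι M) := by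
  classical
  have hlim : PureInjective R (Module.DirectLimit (FinsetSumG R M) (finsetSumTr R M)) :=
    hRHS (Finset ι) (FinsetSumG R M) (finsetSumTr R M) (finsetSumG_pureInjective R M hPI)
      (finsetSumTr_pureEmbedding R M)
  set φ : Module.DirectLimit (FinsetSumG R M) (finsetSumTr R M) →ₗ[R] DirectSum ι M :=
    Module.DirectLimit.lift R (Finset ι) (FinsetSumG R M) (finsetSumTr R M)
      (finsetSumφaux R M) (fun s t h x => finsetSumφaux_compat R M s t h x) with hφ
  set ψ : DirectSum ι M →ₗ[R] Module.DirectLimit (FinsetSumG R M) (finsetSumTr R M) :=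
    DirectSum.toModule R ι (Module.DirectLimit (FinsetSumG R M) (finsetSumTr R M))
      (fun i => (Module.DirectLimit.of R (Finset ι) (FinsetSumG R M) (finsetSumTr R M) {i}).comp
        (DirectSum.lof R {j // j ∈ ({i} : Finset ι)} (fun j => M j.1)
          ⟨i, Finset.mem_singleton_self i⟩)) with hψ
  have hφψ : φ.comp ψ = LinearMap.id := by
    apply DirectSum.linearMap_ext
    intro i
    ext x : 1
    simp only [LinearMap.comp_apply, LinearMap.id_comp, LinearMap.id_apply]
    rw [hψ, DirectSum.toModule_lof (R := R) (ι := ι) (M := M)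
      (N := Module.DirectLimit (FinsetSumG R M) (finsetSumTr R M))
      (φ := fun i => (Module.DirectLimit.of R (Finset ι) (FinsetSumG R M)
          (finsetSumTr R M) {i}).comp
        (DirectSum.lof R {j // j ∈ ({i} : Finset ι)} (fun j => M j.1)
          ⟨i, Finset.mem_singleton_self i⟩)) i x]
    simp only [LinearMap.comp_apply]
    rw [hφ, Module.DirectLimit.lift_of]
    exact finsetSumφaux_lof R M {i} ⟨i, Finset.mem_singleton_self i⟩ x
  have hψφ : ψ.comp φ = LinearMap.id := by
    apply LinearMap.ext
    intro z
    induction z using Module.DirectLimit.induction_on with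
    | ih s y =>
      simp only [LinearMap.comp_apply, LinearMap.id_apply]
      have hmap : (ψ.comp (φ.comp
          (Module.DirectLimit.of R (Finset ι) (FinsetSumG R M) (finsetSumTr R M) s))) =
          Module.DirectLimit.of R (Finset ι) (FinsetSumG R M) (finsetSumTr R M) s := by
        apply DirectSum.linearMap_ext
        intro i
        ext x
        simp only [LinearMap.comp_apply]
        rw [hφ, Module.DirectLimit.lift_of, finsetSumφaux_lof R M s i x, hψ,
          DirectSum.toModule_lof (R := R) (ι := ι) (M := M)
            (N := Module.DirectLimit (FinsetSumG R M) (finsetSumTr R M))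
            (φ := fun i => (Module.DirectLimit.of R (Finset ι) (FinsetSumG R M)
                (finsetSumTr R M) {i}).comp
              (DirectSum.lof R {j // j ∈ ({i} : Finset ι)} (fun j => M j.1)
                ⟨i, Finset.mem_singleton_self i⟩)) i.1 x]
        simp only [LinearMap.comp_apply]
        have h1 : ({i.1} : Finset ι) ≤ s := by
          intro a ha
          rw [Finset.mem_singleton] at ha
          rw [ha]
          exact i.2
        have h2 : finsetSumTr R M {i.1} s h1
            (DirectSum.lof R {j // j ∈ ({i.1} : Finset ι)} (fun j => M j.1)
              ⟨i.1, Finset.mem_singleton_self i.1⟩ x) =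
            DirectSum.lof R {j // j ∈ s} (fun j => M j.1) i x :=
          finsetSumTr_lof R M {i.1} s h1 ⟨i.1, Finset.mem_singleton_self i.1⟩ x
        rw [← h2, Module.DirectLimit.of_f]
      calc ψ (φ (Module.DirectLimit.of R (Finset ι) (FinsetSumG R M) (finsetSumTr R M) s y)) =
          (ψ.comp (φ.comp
            (Module.DirectLimit.of R (Finset ι) (FinsetSumG R M) (finsetSumTr R M) s))) y := rfl
        _ = Module.DirectLimit.of R (Finset ι) (FinsetSumG R M) (finsetSumTr R M) s y := by
            rw [hmap]
  exact pureInjective_of_equiv (LinearEquiv.ofLinear φ ψ hφψ hψφ) hlim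

end Backward

theorem stmt19 (R : Type u) [Ring R] :
    -- every direct sum of pure-injective `R`-modules is pure-injective
    (∀ (ι : Type u) (M : ι → Type u) [∀ i, AddCommGroup (M i)] [∀ i, Module R (M i)],
      (∀ i, PureInjective R (M i)) → PureInjective R (DirectSum ι M)) ↔
    -- iff for every directed system of pure-injective modules with pure-embedding
    -- transition maps, the direct limit is pure-injective
    (∀ (ι : Type u) [Preorder ι] [IsDirected ι (· ≤ ·)] [Nonempty ι] [DecidableEq ι]
      (G : ι → Type u) [∀ i, AddCommGroup (G i)] [∀ i, Module R (G i)]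
      (f : ∀ i j, i ≤ j → G i →ₗ[R] G j) [DirectedSystem G fun i j h => f i j h],
      (∀ i, PureInjective R (G i)) →
      (∀ (i j : ι) (h : i ≤ j), IsPureEmbedding (f i j h)) →
      PureInjective R (Module.DirectLimit G f)) := by
  constructor
  · intro hL
    exact forward_dir hL
  · intro hR ι M _ _ hPI
    letI : DecidableEq ι := Classical.decEq ι
    exact backward_dir R M hR hPI
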